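/- Consider a PFB instance with r_j = 0 for all jobs j and due dates satisfying d_1 ≤ d_2 ≤ … ≤ d_n. Then for every feasible schedule S there exists a feasible permutation schedule Ŝ ordered by the identity permutation (c_{i,1}(Ŝ) ≤ c_{i,2}(Ŝ) ≤ … ≤ c_{i,n}(Ŝ) for all machines i) such that Σ_{j=1}^{n} max(C_j(Ŝ) − d_j, 0) ≤ Σ_{j=1}^{n} max(C_j(S) − d_j, 0). In particular, any earliest due date ordering is optimal for minimizing the total tardiness. -/

import Mathlib

-- pigeonhole-based pointwise comparison of monotone rearrangements
lemma L2 {N : ℕ} (u v : Fin N → ℕ) (hu : Monotone u) (hv : Monotone v)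
    (ρ : Equiv.Perm (Fin N)) (h : ∀ j, u j ≤ v (ρ j)) : ∀ k, u k ≤ v k := by
  intro k
  have : ∃ j, k ≤ j ∧ ρ j ≤ k := by
    by_contra H
    push_neg at H
    have hmaps : ∀ j ∈ Finset.Ici k, ρ j ∈ Finset.Ioi k := by
      intro j hj
      simp only [Finset.mem_Ici] at hj
      simp only [Finset.mem_Ioi]
      exact H j hj
    have hcard := Finset.card_le_card_of_injOn ρ hmaps
      (fun a _ b _ hab => ρ.injective hab)
    rw [Fin.card_Ici, Fin.card_Ioi] at hcard
    have := k.isLt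
    omega
  obtain ⟨j, hkj, hjk⟩ := this
  exact (hu hkj).trans ((h j).trans (hv hjk))

lemma sum_pair_le {N : ℕ} (F G : Fin N → ℤ) (a b : Fin N) (hab : a ≠ b)
    (h : ∀ j, j ≠ a → j ≠ b → F j = G j) (hpair : F a + F b ≤ G a + G b) :
    ∑ j, F j ≤ ∑ j, G j := by
  have ha : a ∈ (Finset.univ : Finset (Fin N)) := Finset.mem_univ a
  have hb : b ∈ (Finset.univ : Finset (Fin N)).erase a :=
    Finset.mem_erase.2 ⟨fun hba => hab hba.symm, Finset.mem_univ b⟩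
  have hrest : ∑ j ∈ (Finset.univ.erase a).erase b, F j
      = ∑ j ∈ (Finset.univ.erase a).erase b, G j := by
    refine Finset.sum_congr rfl fun j hj => ?_
    simp only [Finset.mem_erase] at hj
    exact h j hj.2.1 hj.1
  rw [← Finset.add_sum_erase _ F ha, ← Finset.add_sum_erase _ F hb,
    ← Finset.add_sum_erase _ G ha, ← Finset.add_sum_erase _ G hb, hrest]
  linarith

lemma supermod (x X y Y : ℤ) (h1 : x ≤ X) (h2 : y ≤ Y) :
    min X y + min x Y ≤ min x y + min X Y := by omega

lemma L1 : ∀ (N : ℕ) (s d : Fin N → ℤ), Monotone s → Monotone d →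
    ∀ τ : Equiv.Perm (Fin N),
      ∑ j, min (s (τ j)) (d j) ≤ ∑ j, min (s j) (d j) := by
  intro N
  induction N with
  | zero => intro s d _ _ τ; simp
  | succ N ih =>
    intro s d hs hd
    suffices h0 : ∀ τ : Equiv.Perm (Fin (N+1)), τ 0 = 0 →
        ∑ j, min (s (τ j)) (d j) ≤ ∑ j, min (s j) (d j) by
      intro τ
      by_cases hτ : τ 0 = 0
      · exact h0 τ hτ
      · set j0 : Fin (N+1) := τ⁻¹ 0 with hj0def
        have hτj0 : τ j0 = 0 := τ.apply_symm_apply 0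
        have hj0 : j0 ≠ 0 := fun h => hτ (h ▸ hτj0)
        set τ' : Equiv.Perm (Fin (N+1)) := τ * Equiv.swap 0 j0 with hτ'def
        have hτ'0 : τ' 0 = 0 := by
          simp [hτ'def, Equiv.swap_apply_left, hτj0]
        have hτ'j0 : τ' j0 = τ 0 := by
          simp [hτ'def, Equiv.swap_apply_right]
        have exch : ∑ j, min (s (τ j)) (d j) ≤ ∑ j, min (s (τ' j)) (d j) := by
          refine sum_pair_le _ _ 0 j0 (fun h => hj0 h.symm) ?_ ?_
          · intro j hj0' hjj0
            have : τ' j = τ j := by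
              simp [hτ'def, Equiv.swap_apply_of_ne_of_ne hj0' hjj0]
            rw [this]
          · rw [hτ'0, hτ'j0, hτj0]
            have h1 : s 0 ≤ s (τ 0) := hs (Fin.zero_le _)
            have h2 : d 0 ≤ d j0 := hd (Fin.zero_le _)
            omega
        exact exch.trans (h0 τ' hτ'0)
    intro τ hτ0
    have key : ∀ j : Fin N, τ j.succ ≠ 0 := by
      intro j h
      exact Fin.succ_ne_zero j (τ.injective (h.trans hτ0.symm))
    have key' : ∀ j : Fin N, τ⁻¹ j.succ ≠ 0 := by
      intro j h
      have := congrArg τ h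
      rw [Equiv.Perm.inv_def, τ.apply_symm_apply, hτ0] at this
      exact Fin.succ_ne_zero j this
    set π : Equiv.Perm (Fin N) :=
      { toFun := fun j => (τ j.succ).pred (key j)
        invFun := fun j => (τ⁻¹ j.succ).pred (key' j)
        left_inv := by
          intro j
          simp only []
          apply Fin.succ_injective
          rw [Fin.succ_pred, Fin.succ_pred, Equiv.Perm.inv_def, Equiv.symm_apply_apply]
        right_inv := by
          intro j
          simp only []
          apply Fin.succ_injective
          rw [Fin.succ_pred, Fin.succ_pred, Equiv.Perm.inv_def, Equiv.apply_symm_apply] } with hπdef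
    have hπ : ∀ j : Fin N, τ j.succ = (π j).succ := by
      intro j
      show τ j.succ = ((τ j.succ).pred (key j)).succ
      exact (Fin.succ_pred _ (key j)).symm
    rw [Fin.sum_univ_succ, Fin.sum_univ_succ, hτ0]
    have := ih (fun j => s j.succ) (fun j => d j.succ)
      (fun a b hab => hs (Fin.strictMono_succ.monotone hab))
      (fun a b hab => hd (Fin.strictMono_succ.monotone hab)) π
    simp only [hπ]
    exact add_le_add_right this _


/-- A PFB instance has `m+1` machines (indexed by `Fin (m+1)`, so at least one) and
`n+1` jobs (indexed by `Fin (n+1)`, so at least one). `p i` is the processing time of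
machine `i`, `b i` its maximum batch size, `r j` the release date of job `j`.
A schedule `c` assigns to machine `i` and job `j` the completion time `c i j`.
`Feasible p b r c` says: (i) each job finishes on the first machine no earlier than its
release date plus `p 0`; (ii) consecutive machines leave enough processing time;
(iii) two jobs with different completion times on a machine differ by at least the
processing time (jobs with equal completion time form one batch); (iv) at most `b i`
jobs complete at any given time on machine `i`. -/
def Feasible {m n : ℕ} (p b : Fin (m + 1) → ℕ) (r : Fin (n + 1) → ℕ)
    (c : Fin (m + 1) → Fin (n + 1) → ℕ) : Prop :=
  (∀ j, r j + p 0 ≤ c 0 j) ∧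
  (∀ (i : Fin m) (j : Fin (n + 1)), c i.castSucc j + p i.succ ≤ c i.succ j) ∧
  (∀ (i : Fin (m + 1)) (j j' : Fin (n + 1)),
      c i j ≠ c i j' → c i j + p i ≤ c i j' ∨ c i j' + p i ≤ c i j) ∧
  (∀ (i : Fin (m + 1)) (t : ℕ),
      (Finset.univ.filter (fun j => c i j = t)).card ≤ b i)

/-- `c` is a permutation schedule ordered by the permutation `σ`:
on every machine the completion times are nondecreasing along `σ`. -/
def OrderedBy {m n : ℕ} (c : Fin (m + 1) → Fin (n + 1) → ℕ)
    (σ : Equiv.Perm (Fin (n + 1))) : Prop :=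
  ∀ i : Fin (m + 1), Monotone fun j => c i (σ j)

/-- with all release dates `0` and non-decreasing due dates
`d 0 ≤ d 1 ≤ … ≤ d n`, for every feasible schedule `c` there is a feasible permutation
schedule ordered by the identity permutation whose total tardiness is at most that of
`c`; in particular an earliest due date ordering is optimal for minimizing the total
tardiness. -/
theorem stmt13 {m n : ℕ} (p b : Fin (m + 1) → ℕ) (r : Fin (n + 1) → ℕ)
    (hp : ∀ i, 1 ≤ p i) (hb : ∀ i, 1 ≤ b i ∧ b i ≤ n + 1)
    (hr : ∀ j, r j = 0)
    (d : Fin (n + 1) → ℕ) (hd : Monotone d)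
    (c : Fin (m + 1) → Fin (n + 1) → ℕ) (hc : Feasible p b r c) :
    ∃ chat : Fin (m + 1) → Fin (n + 1) → ℕ,
      Feasible p b r chat ∧ (∀ i : Fin (m + 1), Monotone (chat i)) ∧
      ∑ j, max ((chat (Fin.last m) j : ℤ) - (d j : ℤ)) 0 ≤
        ∑ j, max ((c (Fin.last m) j : ℤ) - (d j : ℤ)) 0 := by
  obtain ⟨hc1, hc2, hc3, hc4⟩ := hc
  set σ : Fin (m + 1) → Equiv.Perm (Fin (n + 1)) := fun i => Tuple.sort (c i) with hσ
  refine ⟨fun i j => c i (σ i j), ⟨?_, ?_, ?_, ?_⟩, ?_, ?_⟩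
  · intro j
    have := hc1 (σ 0 j)
    simp only [hr] at this ⊢
    exact this
  · intro i j
    have hmono1 : Monotone fun j => c i.castSucc (σ i.castSucc j) + p i.succ :=
      fun a b hab => add_le_add_left (Tuple.monotone_sort (c i.castSucc) hab) _
    have hmono2 : Monotone fun j => c i.succ (σ i.succ j) :=
      fun a b hab => Tuple.monotone_sort (c i.succ) hab
    refine L2 _ _ hmono1 hmono2 ((σ i.castSucc).trans (σ i.succ).symm) (fun j => ?_) j
    simp only [Equiv.trans_apply, Equiv.apply_symm_apply]
    exact hc2 i (σ i.castSucc j)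
  · intro i j j' hne
    exact hc3 i _ _ hne
  · intro i t
    have : (Finset.univ.filter (fun j => c i (σ i j) = t)).card
        = (Finset.univ.filter (fun j => c i j = t)).card := by
      refine Finset.card_bij (fun j _ => σ i j) ?_ ?_ ?_
      · intro j hj
        simp only [Finset.mem_filter, Finset.mem_univ, true_and] at hj ⊢
        exact hj
      · intro a _ b _ hab
        exact (σ i).injective hab
      · intro j' hj'
        refine ⟨(σ i).symm j', ?_, (σ i).apply_symm_apply j'⟩
        simp only [Finset.mem_filter, Finset.mem_univ, true_and,
          Equiv.apply_symm_apply] at hj' ⊢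
        exact hj'
    rw [this]
    exact hc4 i t
  · intro i
    exact fun a b hab => Tuple.monotone_sort (c i) hab
  · set σl := σ (Fin.last m) with hσl
    set s : Fin (n + 1) → ℤ := fun j => (c (Fin.last m) (σl j) : ℤ) with hs
    set a : Fin (n + 1) → ℤ := fun j => (c (Fin.last m) j : ℤ) with ha
    set d' : Fin (n + 1) → ℤ := fun j => (d j : ℤ) with hd'
    have hsm : Monotone s := fun x y hxy =>
      Int.ofNat_le.2 (Tuple.monotone_sort (c (Fin.last m)) hxy)
    have hdm : Monotone d' := fun x y hxy => Int.ofNat_le.2 (hd hxy)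
    have key := L1 (n + 1) s d' hsm hdm σl.symm
    have hsa : ∀ j, s (σl.symm j) = a j := fun j => by
      simp only [hs, ha, Equiv.apply_symm_apply]
    simp only [hsa] at key
    have hsum : ∑ j, s j = ∑ j, a j := Equiv.sum_comp σl a
    calc ∑ j, max ((c (Fin.last m) (σl j) : ℤ) - (d j : ℤ)) 0
        = ∑ j, (s j - min (s j) (d' j)) := by
          refine Finset.sum_congr rfl fun j _ => ?_
          simp only [hs, hd']
          omega
      _ = ∑ j, s j - ∑ j, min (s j) (d' j) := Finset.sum_sub_distrib _ _
      _ ≤ ∑ j, a j - ∑ j, min (a j) (d' j) := by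
          rw [hsum]; exact sub_le_sub_left key _
      _ = ∑ j, (a j - min (a j) (d' j)) := (Finset.sum_sub_distrib _ _).symm
      _ = ∑ j, max ((c (Fin.last m) j : ℤ) - (d j : ℤ)) 0 := by
          refine Finset.sum_congr rfl fun j _ => ?_
          simp only [ha, hd']
          omega
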